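/- For every r ∈ (0,1) there is a unique s ∈ (1,2) such that (1−r)^s + 9(r/3)^s = 1, and the resulting function s : (0,1) → (1,2) is strictly increasing and a bijection from (0,1) onto (1,2). -/

import Mathlib

open Set

noncomputable def Ff (r s : ℝ) : ℝ := (1 - r) ^ s + 9 * (r / 3) ^ s

lemma Ff_anti {r : ℝ} (hr0 : 0 < r) (hr1 : r < 1) : StrictAnti (Ff r) := by
  have h1 : (0:ℝ) < 1 - r := by linarith
  have h2 : 1 - r < 1 := by linarith
  have h3 : 0 < r / 3 := by linarith
  have h4 : r / 3 < 1 := by linarith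
  intro a b hab
  have e1 := Real.rpow_lt_rpow_of_exponent_gt h1 h2 hab
  have e2 := Real.rpow_lt_rpow_of_exponent_gt h3 h4 hab
  unfold Ff; linarith

lemma Ff_cont {r : ℝ} (hr0 : 0 < r) (hr1 : r < 1) : Continuous (Ff r) := by
  have h1 : (0:ℝ) < 1 - r := by linarith
  have h3 : 0 < r / 3 := by linarith
  have : Ff r = fun s => Real.exp (Real.log (1 - r) * s)
      + 9 * Real.exp (Real.log (r / 3) * s) := by
    funext s
    unfold Ff
    rw [Real.rpow_def_of_pos h1, Real.rpow_def_of_pos h3]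
  rw [this]
  fun_prop

lemma sq_rpow (x : ℝ) : x ^ (2:ℝ) = x * x := by
  rw [show (2:ℝ) = ((2:ℕ):ℝ) by norm_num, Real.rpow_natCast]; ring

lemma exists_unique_s {r : ℝ} (hr0 : 0 < r) (hr1 : r < 1) :
    ∃! s : ℝ, s ∈ Ioo (1:ℝ) 2 ∧ Ff r s = 1 := by
  have hanti := Ff_anti hr0 hr1
  have hF1 : Ff r 1 = 1 + 2 * r := by
    unfold Ff; rw [Real.rpow_one, Real.rpow_one]; ring
  have hF2 : Ff r 2 = 1 - 2*r + 2*r^2 := by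
    unfold Ff; rw [sq_rpow, sq_rpow]; ring
  have h1 : (1:ℝ) ∈ Ioo (Ff r 2) (Ff r 1) := by
    rw [hF1, hF2]; constructor <;> nlinarith
  obtain ⟨s, hs, hFs⟩ := intermediate_value_Ioo' (by norm_num : (1:ℝ) ≤ 2)
    (Ff_cont hr0 hr1).continuousOn h1
  exact ⟨s, ⟨hs, hFs⟩, fun t ⟨ht, hFt⟩ => hanti.injective (hFt.trans hFs.symm)⟩

lemma key_ineq {r s : ℝ} (hr0 : 0 < r) (hr1 : r < 1) (hs1 : 1 < s)
    (hF : Ff r s = 1) : 1 < 3 ^ (2 - s) * r ^ (s - 1) := by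
  have h3s : (0:ℝ) < (3:ℝ) ^ s := Real.rpow_pos_of_pos (by norm_num) s
  have hdiv : (r / 3) ^ s = r ^ s / 3 ^ s := Real.div_rpow hr0.le (by norm_num) s
  have h2s : (3:ℝ) ^ ((2:ℝ) - s) = 9 / 3 ^ s := by
    rw [Real.rpow_sub (by norm_num), sq_rpow]
    norm_num
  have hrs : r ^ (s - 1) = r ^ s / r := by
    rw [Real.rpow_sub hr0, Real.rpow_one]
  have hlt : (1 - r) ^ s < 1 - r := by
    have := Real.rpow_lt_rpow_of_exponent_gt (by linarith : (0:ℝ) < 1 - r)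
      (by linarith) hs1
    rwa [Real.rpow_one] at this
  have h9 : r < 9 * (r / 3) ^ s := by unfold Ff at hF; linarith
  have heq : 3 ^ ((2:ℝ) - s) * r ^ (s - 1) = (9 * (r / 3) ^ s) / r := by
    rw [h2s, hrs, hdiv]; field_simp
  rw [heq, one_lt_div hr0]; exact h9

lemma mono_in_r {s r1 r2 : ℝ} (hr1 : 0 < r1) (hr2 : r2 < 1) (h12 : r1 < r2)
    (hs1 : 1 < s) (hkey : 1 < 3 ^ (2 - s) * r1 ^ (s - 1)) :
    Ff r1 s < Ff r2 s := by
  have hs0 : (0:ℝ) ≤ s := by linarith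
  have hgc : Continuous (fun r => Ff r s) := by
    unfold Ff
    exact ((continuous_const.sub continuous_id).rpow_const (fun x => Or.inr hs0)).add
      (continuous_const.mul ((continuous_id.div_const 3).rpow_const (fun x => Or.inr hs0)))
  have hmono : StrictMonoOn (fun r => Ff r s) (Icc r1 r2) := by
    apply strictMonoOn_of_deriv_pos (convex_Icc r1 r2) hgc.continuousOn
    intro x hx
    rw [interior_Icc] at hx
    have hx0 : 0 < x := lt_trans hr1 hx.1
    have hx1 : x < 1 := lt_trans hx.2 hr2
    have hd1 : HasDerivAt (fun r : ℝ => (1 - r) ^ s)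
        ((s * (1 - x) ^ (s - 1)) * (-1)) x := by
      have houter : HasDerivAt (fun y : ℝ => y ^ s) (s * (1 - x) ^ (s - 1)) (1 - x) :=
        Real.hasDerivAt_rpow_const (Or.inl (by linarith))
      have hinner : HasDerivAt (fun r : ℝ => 1 - r) (-1) x := by
        simpa using (hasDerivAt_id x).const_sub (1:ℝ)
      exact houter.comp x hinner
    have hd2 : HasDerivAt (fun r : ℝ => (r / 3) ^ s)
        ((s * (x / 3) ^ (s - 1)) * (1 / 3)) x := by
      have houter : HasDerivAt (fun y : ℝ => y ^ s) (s * (x / 3) ^ (s - 1)) (x / 3) :=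
        Real.hasDerivAt_rpow_const (Or.inl (by positivity))
      have hinner : HasDerivAt (fun r : ℝ => r / 3) (1 / 3) x := by
        simpa using (hasDerivAt_id x).div_const (3:ℝ)
      exact houter.comp x hinner
    have hd : HasDerivAt (fun r => Ff r s)
        ((s * (1 - x) ^ (s - 1)) * (-1) + 9 * ((s * (x / 3) ^ (s - 1)) * (1 / 3))) x := by
      unfold Ff
      exact hd1.add (hd2.const_mul 9)
    rw [hd.deriv]
    -- positivity of the derivative
    have hc : (0:ℝ) < (3:ℝ) ^ (s - 1) := Real.rpow_pos_of_pos (by norm_num) _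
    have h1 : (x / 3) ^ (s - 1) = x ^ (s - 1) / 3 ^ (s - 1) :=
      Real.div_rpow hx0.le (by norm_num) _
    have h2 : (3:ℝ) ^ ((2:ℝ) - s) * 3 ^ (s - 1) = 3 := by
      rw [← Real.rpow_add (by norm_num)]
      rw [show (2:ℝ) - s + (s - 1) = 1 by ring, Real.rpow_one]
    have hk : (0:ℝ) < (3:ℝ) ^ ((2:ℝ) - s) := Real.rpow_pos_of_pos (by norm_num) _
    have hax : r1 ^ (s - 1) ≤ x ^ (s - 1) :=
      Real.rpow_le_rpow hr1.le hx.1.le (by linarith)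
    have hka : 1 < 3 ^ ((2:ℝ) - s) * x ^ (s - 1) :=
      lt_of_lt_of_le hkey (mul_le_mul_of_nonneg_left hax hk.le)
    have hA : (3:ℝ) ^ ((2:ℝ) - s) * x ^ (s - 1) = 3 * ((x / 3) ^ (s - 1)) := by
      rw [h1]
      field_simp
      linear_combination h2
    have h3u : 1 < 3 * ((x / 3) ^ (s - 1)) := by rw [← hA]; exact hka
    have hb : (1 - x) ^ (s - 1) < 1 :=
      Real.rpow_lt_one (by linarith) (by linarith) (by linarith)
    have hs0' : 0 < s := by linarith
    nlinarith [mul_lt_mul_of_pos_left (lt_trans hb h3u) hs0']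
  exact hmono (left_mem_Icc.mpr h12.le) (right_mem_Icc.mpr h12.le) h12

lemma exists_r {t : ℝ} (ht1 : 1 < t) (ht2 : t < 2) :
    ∃ r ∈ Ioo (0:ℝ) 1, Ff r t = 1 := by
  set r0 : ℝ := ((3:ℝ) ^ (t - 2) / 2) ^ (1 / (t - 1)) with hr0def
  have hb0 : (0:ℝ) < (3:ℝ) ^ (t - 2) := Real.rpow_pos_of_pos (by norm_num) _
  have hb1 : (3:ℝ) ^ (t - 2) < 1 :=
    Real.rpow_lt_one_of_one_lt_of_neg (by norm_num) (by linarith)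
  have hr0pos : 0 < r0 := Real.rpow_pos_of_pos (by positivity) _
  have hr0lt : r0 < 1 :=
    Real.rpow_lt_one (by positivity) (by linarith)
      (one_div_pos.mpr (by linarith : (0:ℝ) < t - 1))
  have hpow : r0 ^ (t - 1) = (3:ℝ) ^ (t - 2) / 2 := by
    rw [hr0def, ← Real.rpow_mul (by positivity),
      one_div_mul_cancel (by linarith : t - 1 ≠ 0), Real.rpow_one]
  -- value of Ff at r0 is < 1
  have hval : Ff r0 t < 1 := by
    have h3t : (0:ℝ) < (3:ℝ) ^ t := Real.rpow_pos_of_pos (by norm_num) _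
    have hdiv : (r0 / 3) ^ t = r0 ^ t / 3 ^ t := Real.div_rpow hr0pos.le (by norm_num) t
    have hrt : r0 ^ t = r0 ^ (t - 1) * r0 := by
      have h := Real.rpow_add hr0pos (t - 1) 1
      rw [show t - 1 + 1 = t by ring, Real.rpow_one] at h
      exact h
    have h3t2 : (3:ℝ) ^ (t - 2) * 9 = 3 ^ t := by
      have h := Real.rpow_add (show (0:ℝ) < 3 by norm_num) (t - 2) 2
      rw [show t - 2 + 2 = t by ring, sq_rpow] at h
      rw [h]; ring
    have hA : 9 * (r0 / 3) ^ t = r0 / 2 := by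
      rw [hdiv, hrt, hpow, ← h3t2]
      field_simp [hb0.ne']
    have hlt : (1 - r0) ^ t < 1 - r0 := by
      have h := Real.rpow_lt_rpow_of_exponent_gt (by linarith : (0:ℝ) < 1 - r0)
        (by linarith) ht1
      rwa [Real.rpow_one] at h
    unfold Ff
    rw [hA]
    linarith
  -- value of Ff at r = 1 is > 1
  have hval1 : 1 < Ff 1 t := by
    unfold Ff
    rw [show (1:ℝ) - 1 = 0 by ring, Real.zero_rpow (by linarith : t ≠ 0)]
    have hdiv : ((1:ℝ) / 3) ^ t = 1 / 3 ^ t := by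
      rw [Real.div_rpow (by norm_num) (by norm_num), Real.one_rpow]
    rw [hdiv]
    have h3t : (0:ℝ) < (3:ℝ) ^ t := Real.rpow_pos_of_pos (by norm_num) _
    have h2s : (3:ℝ) ^ t < 9 := by
      have h := Real.rpow_lt_rpow_of_exponent_lt (by norm_num : (1:ℝ) < 3) ht2
      rw [sq_rpow] at h
      linarith
    have hgt : (1:ℝ) < 9 / 3 ^ t := (one_lt_div h3t).mpr h2s
    have heq : (0:ℝ) + 9 * (1 / 3 ^ t) = 9 / 3 ^ t := by ring
    rw [heq]
    exact hgt
  have hcont : Continuous (fun r => Ff r t) := by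
    unfold Ff
    exact ((continuous_const.sub continuous_id).rpow_const
        (fun x => Or.inr (by linarith))).add
      (continuous_const.mul ((continuous_id.div_const 3).rpow_const
        (fun x => Or.inr (by linarith))))
  obtain ⟨r, hr, hFr⟩ := intermediate_value_Ioo (le_of_lt hr0lt)
    hcont.continuousOn (show (1:ℝ) ∈ Ioo (Ff r0 t) (Ff 1 t) from ⟨hval, hval1⟩)
  exact ⟨r, ⟨lt_trans hr0pos hr.1, hr.2⟩, hFr⟩

theorem unique_s_and_bijection :
    (∀ r ∈ Ioo (0:ℝ) 1,
      ∃! s : ℝ, s ∈ Ioo (1:ℝ) 2 ∧ (1 - r) ^ s + 9 * (r / 3) ^ s = 1) ∧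
    ∀ S : ℝ → ℝ,
      (∀ r ∈ Ioo (0:ℝ) 1, S r ∈ Ioo (1:ℝ) 2 ∧ (1 - r) ^ (S r) + 9 * (r / 3) ^ (S r) = 1) →
      StrictMonoOn S (Ioo (0:ℝ) 1) ∧ Set.BijOn S (Ioo (0:ℝ) 1) (Ioo (1:ℝ) 2) := by
  constructor
  · exact fun r hr => exists_unique_s hr.1 hr.2
  · intro S hS
    have hmono : StrictMonoOn S (Ioo (0:ℝ) 1) := by
      intro r1 hr1 r2 hr2 h12
      obtain ⟨hS1mem, hS1eq⟩ := hS r1 hr1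
      obtain ⟨hS2mem, hS2eq⟩ := hS r2 hr2
      have hS1eq' : Ff r1 (S r1) = 1 := hS1eq
      have hS2eq' : Ff r2 (S r2) = 1 := hS2eq
      have hkey := key_ineq hr1.1 hr1.2 hS1mem.1 hS1eq'
      have hlt : 1 < Ff r2 (S r1) := by
        rw [← hS1eq']
        exact mono_in_r hr1.1 hr2.2 h12 hS1mem.1 hkey
      by_contra hcon
      push_neg at hcon
      have := (Ff_anti hr2.1 hr2.2).antitone hcon
      rw [hS2eq'] at this
      linarith
    refine ⟨hmono, fun r hr => (hS r hr).1, hmono.injOn, ?_⟩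
    intro t ht
    obtain ⟨r, hr, hFr⟩ := exists_r ht.1 ht.2
    obtain ⟨hSmem, hSeq⟩ := hS r hr
    have huniq := exists_unique_s hr.1 hr.2
    have : S r = t := huniq.unique ⟨hSmem, hSeq⟩ ⟨ht, hFr⟩
    exact ⟨r, hr, this⟩
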